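/- arXiv:math/0312223 — 4 statements merged into one kernel-verified Lean document; each statement's English description precedes it below -/
import Mathlib

section
/- lim_{k→∞} [ (1/k²) · ∑_{j=1}^{k} log (j−1)! − (1/2) · log k ] = −3/4. -/
open Filter Real Finset Nat


lemma integral_xlogx {b : ℝ} (hb : 1 ≤ b) :
    ∫ x in (1:ℝ)..b, x * Real.log x = b ^ 2 / 2 * Real.log b - b ^ 2 / 4 + 1 / 4 := by
  have key : ∀ x ∈ Set.uIcc (1:ℝ) b, HasDerivAt (fun y : ℝ => y ^ 2 / 2 * Real.log y - y ^ 2 / 4)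
      (x * Real.log x) x := by
    intro x hx
    rw [Set.uIcc_of_le hb] at hx
    have hx0 : x ≠ 0 := by have := hx.1; intro h; rw [h] at this; linarith
    have h1 : HasDerivAt (fun y : ℝ => y ^ 2 / 2) x x := by
      have := (hasDerivAt_pow 2 x).div_const 2
      refine this.congr_deriv ?_
      simp
    have h2 := h1.mul (Real.hasDerivAt_log hx0)
    have h3 : HasDerivAt (fun y : ℝ => y ^ 2 / 4) (x / 2) x := by
      have := (hasDerivAt_pow 2 x).div_const 4
      refine this.congr_deriv ?_
      simp; ring
    have h4 := h2.sub h3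
    refine h4.congr_deriv ?_
    field_simp
    ring
  have hcont : ContinuousOn (fun x : ℝ => x * Real.log x) (Set.uIcc 1 b) := by
    apply ContinuousOn.mul continuousOn_id
    apply Real.continuousOn_log.mono
    rw [Set.uIcc_of_le hb]
    intro x hx
    simp only [Set.mem_compl_iff, Set.mem_singleton_iff]
    have := hx.1; intro h; rw [h] at this; linarith
  rw [intervalIntegral.integral_eq_sub_of_hasDerivAt key hcont.intervalIntegrable]
  simp [Real.log_one]

lemma hmono (n : ℕ) : MonotoneOn (fun x : ℝ => x * Real.log x) (Set.Icc (1:ℝ) n) := by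
  intro a ha b hb hab
  exact mul_le_mul hab (Real.log_le_log (by linarith [ha.1]) hab) (Real.log_nonneg ha.1)
    (by linarith [hb.1])

lemma sum_lower {k : ℕ} (hk : 1 ≤ k) :
    (k:ℝ) ^ 2 / 2 * Real.log k - (k:ℝ) ^ 2 / 4 + 1 / 4
      ≤ ∑ j ∈ Finset.Icc 1 k, ((j:ℝ) * Real.log j) := by
  have h := MonotoneOn.integral_le_sum_Ico (f := fun x : ℝ => x * Real.log x) hk
    (by simpa using hmono k)
  rw [show ((1:ℕ):ℝ) = (1:ℝ) by norm_num, integral_xlogx (by exact_mod_cast hk)] at h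
  refine le_trans h ?_
  have e1 : ∑ i ∈ Finset.Ico 1 k, (fun x : ℝ => x * Real.log x) ((i + 1 : ℕ):ℝ)
      = ∑ i ∈ Finset.Ico 2 (k+1), ((i:ℝ) * Real.log i) := by
    have := Finset.sum_Ico_add' (fun i : ℕ => ((i:ℝ) * Real.log i)) 1 k 1
    simpa using this
  have e2 : ∑ j ∈ Finset.Icc 1 k, ((j:ℝ) * Real.log j)
      = ∑ i ∈ Finset.Ico 2 (k+1), ((i:ℝ) * Real.log i) := by
    rw [← Finset.Ico_add_one_right_eq_Icc, Finset.sum_eq_sum_Ico_succ_bot (by omega)]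
    simp
  rw [e1, e2]

lemma sum_upper {k : ℕ} (hk : 1 ≤ k) :
    ∑ j ∈ Finset.Icc 1 k, ((j:ℝ) * Real.log j)
      ≤ ((k:ℝ) ^ 2 / 2 * Real.log k - (k:ℝ) ^ 2 / 4 + 1 / 4) + (k:ℝ) * Real.log k := by
  have h := MonotoneOn.sum_le_integral_Ico (f := fun x : ℝ => x * Real.log x) hk
    (by simpa using hmono k)
  rw [show ((1:ℕ):ℝ) = (1:ℝ) by norm_num, integral_xlogx (by exact_mod_cast hk)] at h
  have e : ∑ j ∈ Finset.Icc 1 k, ((j:ℝ) * Real.log j)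
      = (∑ j ∈ Finset.Ico 1 k, ((j:ℝ) * Real.log j)) + (k:ℝ) * Real.log k := by
    rw [← Finset.Ico_add_one_right_eq_Icc, Finset.sum_Ico_succ_top hk]
  rw [e]
  exact add_le_add_left h _

lemma tendsto_log_div_nat : Tendsto (fun k : ℕ => Real.log k / (k:ℝ)) atTop (nhds 0) :=
  Real.isLittleO_log_id_atTop.tendsto_div_nhds_zero.comp tendsto_natCast_atTop_atTop

lemma tendsto_one_div_sq : Tendsto (fun k : ℕ => 1 / (k : ℝ) ^ 2) atTop (nhds 0) := by
  have h := tendsto_one_div_atTop_nhds_zero_nat (𝕜 := ℝ)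
  have h2 : (fun k : ℕ => 1 / (k:ℝ)^2) = fun k : ℕ => (1/(k:ℝ)) * (1/(k:ℝ)) := by
    funext k; rw [pow_two]; ring
  rw [h2]; simpa using h.mul h

lemma P1 : Tendsto (fun k : ℕ =>
    (1 / (k:ℝ) ^ 2) * ∑ j ∈ Finset.Icc 1 k, ((j:ℝ) * Real.log j) - (1/2) * Real.log k)
    atTop (nhds (-(1/4))) := by
  have hg : Tendsto (fun k : ℕ => -(1/4) + (1/4) * (1/(k:ℝ)^2)) atTop (nhds (-(1/4))) := by
    have := tendsto_const_nhds (x := (-(1/4):ℝ)) (f := atTop (α := ℕ)) |>.add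
      ((tendsto_const_nhds (x := (1/4:ℝ))).mul tendsto_one_div_sq)
    simpa using this
  have hh : Tendsto (fun k : ℕ => (-(1/4) + (1/4) * (1/(k:ℝ)^2)) + Real.log k / k)
      atTop (nhds (-(1/4))) := by
    have := hg.add tendsto_log_div_nat
    simpa using this
  apply tendsto_of_tendsto_of_tendsto_of_le_of_le' hg hh
  · filter_upwards [eventually_ge_atTop 1] with k hk
    have hk0 : (k:ℝ) ≠ 0 := by positivity
    have h := sum_lower hk
    have h2 := mul_le_mul_of_nonneg_left h (by positivity : (0:ℝ) ≤ 1/(k:ℝ)^2)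
    have h3 : (1/(k:ℝ)^2) * ((k:ℝ) ^ 2 / 2 * Real.log k - (k:ℝ) ^ 2 / 4 + 1 / 4)
        - (1/2) * Real.log k = -(1/4) + (1/4) * (1/(k:ℝ)^2) := by
      field_simp
      ring
    linarith
  · filter_upwards [eventually_ge_atTop 1] with k hk
    have hk0 : (k:ℝ) ≠ 0 := by positivity
    have h := sum_upper hk
    have h2 := mul_le_mul_of_nonneg_left h (by positivity : (0:ℝ) ≤ 1/(k:ℝ)^2)
    have h3 : (1/(k:ℝ)^2) * (((k:ℝ) ^ 2 / 2 * Real.log k - (k:ℝ) ^ 2 / 4 + 1 / 4) + (k:ℝ) * Real.log k)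
        - (1/2) * Real.log k = (-(1/4) + (1/4) * (1/(k:ℝ)^2)) + Real.log k / k := by
      field_simp
      ring
    linarith

lemma gauss (k : ℕ) : ∑ j ∈ Finset.Icc 1 k, (j:ℝ) = (k:ℝ) * ((k:ℝ) + 1) / 2 := by
  induction k with
  | zero => simp
  | succ n ih =>
    rw [← Finset.Ico_add_one_right_eq_Icc, Finset.sum_Ico_succ_top (by omega), Finset.Ico_add_one_right_eq_Icc, ih]
    push_cast
    ring

lemma P2 : Tendsto (fun k : ℕ => (1 / (k:ℝ) ^ 2) * ∑ j ∈ Finset.Icc 1 k, (j:ℝ))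
    atTop (nhds (1/2)) := by
  have hg : Tendsto (fun k : ℕ => 1/2 + (1/2) * (1/(k:ℝ))) atTop (nhds (1/2)) := by
    have := tendsto_const_nhds (x := ((1:ℝ)/2)) (f := atTop (α := ℕ)) |>.add
      ((tendsto_const_nhds (x := (1/2:ℝ))).mul tendsto_one_div_atTop_nhds_zero_nat)
    simpa using this
  apply hg.congr'
  filter_upwards [eventually_ge_atTop 1] with k hk
  have hk0 : (k:ℝ) ≠ 0 := by positivity
  rw [gauss]
  field_simp

lemma P3 : Tendsto (fun k : ℕ => (1 / (k:ℝ) ^ 2) * ∑ j ∈ Finset.Icc 1 k, Real.log j)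
    atTop (nhds 0) := by
  apply tendsto_of_tendsto_of_tendsto_of_le_of_le' tendsto_const_nhds tendsto_log_div_nat
  · filter_upwards [eventually_ge_atTop 1] with k hk
    have : (0:ℝ) ≤ ∑ j ∈ Finset.Icc 1 k, Real.log j := by
      apply Finset.sum_nonneg
      intro j hj
      exact Real.log_nonneg (by exact_mod_cast (Finset.mem_Icc.mp hj).1)
    positivity
  · filter_upwards [eventually_ge_atTop 1] with k hk
    have hk0 : (0:ℝ) < (k:ℝ) := by positivity
    have hb : ∑ j ∈ Finset.Icc 1 k, Real.log j ≤ (k:ℝ) * Real.log k := by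
      calc ∑ j ∈ Finset.Icc 1 k, Real.log j ≤ ∑ _j ∈ Finset.Icc 1 k, Real.log k := by
            apply Finset.sum_le_sum
            intro j hj
            have h1 : (1:ℝ) ≤ (j:ℝ) := by exact_mod_cast (Finset.mem_Icc.mp hj).1
            exact Real.log_le_log (by linarith)
              (by exact_mod_cast (Finset.mem_Icc.mp hj).2)
        _ = (k:ℝ) * Real.log k := by
            rw [Finset.sum_const, Nat.card_Icc]
            simp [nsmul_eq_mul]
    have h2 := mul_le_mul_of_nonneg_left hb (by positivity : (0:ℝ) ≤ 1/(k:ℝ)^2)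
    have h3 : (1/(k:ℝ)^2) * ((k:ℝ) * Real.log k) = Real.log k / k := by
      field_simp
    linarith

lemma P4 : Tendsto (fun k : ℕ =>
    (1 / (k:ℝ) ^ 2) * ∑ j ∈ Finset.Icc 1 k, Real.log (Stirling.stirlingSeq j))
    atTop (nhds 0) := by
  have hs : Tendsto (fun n : ℕ => Real.log (Stirling.stirlingSeq n)) atTop
      (nhds (Real.log (Real.sqrt π))) :=
    ((Real.continuousAt_log (by positivity)).tendsto).comp Stirling.tendsto_stirlingSeq_sqrt_pi
  have hc := hs.cesaro.comp (tendsto_add_atTop_nat 1)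
  have hA : Tendsto (fun k : ℕ => ((k:ℝ) + 1) / (k:ℝ)^2) atTop (nhds 0) := by
    have h := tendsto_one_div_atTop_nhds_zero_nat.add tendsto_one_div_sq
    rw [add_zero] at h
    apply h.congr'
    filter_upwards [eventually_ge_atTop 1] with k hk
    have hk0 : (k:ℝ) ≠ 0 := by positivity
    field_simp
  have := hA.mul hc
  rw [zero_mul] at this
  apply this.congr'
  filter_upwards [eventually_ge_atTop 1] with k hk
  have hk0 : (k:ℝ) ≠ 0 := by positivity
  have hsum : ∑ i ∈ Finset.range (k+1), Real.log (Stirling.stirlingSeq i)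
      = ∑ j ∈ Finset.Icc 1 k, Real.log (Stirling.stirlingSeq j) := by
    rw [Finset.range_eq_Ico, Finset.sum_eq_sum_Ico_succ_bot (by omega), Finset.Ico_add_one_right_eq_Icc]
    simp [Stirling.stirlingSeq_zero]
  simp only [Function.comp]
  rw [hsum]
  push_cast
  field_simp

lemma hterm {j : ℕ} (hj : 1 ≤ j) :
    Real.log ((j - 1)! : ℝ) = (j:ℝ) * Real.log j - (j:ℝ) - (1/2) * Real.log j
      + Real.log (Stirling.stirlingSeq j) + (1/2) * Real.log 2 := by
  have hj0 : (0:ℝ) < (j:ℝ) := by exact_mod_cast hj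
  have hfact : (j ! : ℝ) = (j:ℝ) * ((j-1)! : ℝ) := by
    rw [← Nat.cast_mul, Nat.mul_factorial_pred (by omega)]
  have h1 : Real.log (j ! : ℝ) = Real.log j + Real.log ((j-1)! : ℝ) := by
    rw [hfact, Real.log_mul hj0.ne' (by exact_mod_cast (j-1).factorial_pos.ne')]
  have h2 : Real.log (2 * (j:ℝ)) = Real.log 2 + Real.log j :=
    Real.log_mul two_ne_zero hj0.ne'
  have h3 : Real.log ((j:ℝ) / Real.exp 1) = Real.log j - 1 := by
    rw [Real.log_div hj0.ne' (Real.exp_ne_zero 1), Real.log_exp]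
  have hf := Stirling.log_stirlingSeq_formula j
  rw [h1] at hf
  rw [h2, h3] at hf
  linear_combination -hf

/-- `lim_{k→∞} [ (1/k²) ∑_{j=1}^{k} log (j-1)! - (1/2) log k ] = -3/4`. -/
theorem stmt2 :
    Tendsto (fun k : ℕ =>
        (1 / (k : ℝ) ^ 2) * ∑ j ∈ Finset.Icc 1 k, Real.log ((j - 1)! : ℝ)
          - (1 / 2) * Real.log k)
      atTop (nhds (-(3 / 4))) := by
  have T3 : Tendsto (fun k : ℕ =>
      (1/2) * ((1 / (k:ℝ) ^ 2) * ∑ j ∈ Finset.Icc 1 k, Real.log j)) atTop (nhds 0) := by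
    have := (tendsto_const_nhds (x := ((1:ℝ)/2)) (f := atTop (α := ℕ))).mul P3
    simpa using this
  have T5 : Tendsto (fun k : ℕ => Real.log 2 / 2 * (1 / (k:ℝ))) atTop (nhds 0) := by
    have := (tendsto_const_nhds (x := (Real.log 2 / 2)) (f := atTop (α := ℕ))).mul
      tendsto_one_div_atTop_nhds_zero_nat
    simpa using this
  have comb := (((P1.sub P2).sub T3).add P4).add T5
  have hlim : -(1/4) - 1/2 - 0 + 0 + 0 = -((3:ℝ)/4) := by norm_num
  rw [hlim] at comb
  apply comb.congr'
  filter_upwards [eventually_ge_atTop 1] with k hk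
  have hk0 : (k:ℝ) ≠ 0 := by positivity
  have hsum : ∑ j ∈ Finset.Icc 1 k, Real.log ((j - 1)! : ℝ)
      = ∑ j ∈ Finset.Icc 1 k, ((j:ℝ) * Real.log j)
        - ∑ j ∈ Finset.Icc 1 k, (j:ℝ)
        - (1/2) * ∑ j ∈ Finset.Icc 1 k, Real.log j
        + ∑ j ∈ Finset.Icc 1 k, Real.log (Stirling.stirlingSeq j)
        + (k:ℝ) * ((1/2) * Real.log 2) := by
    rw [Finset.sum_congr rfl (fun j hj => hterm (Finset.mem_Icc.mp hj).1)]
    rw [Finset.sum_add_distrib, Finset.sum_add_distrib, Finset.sum_sub_distrib,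
      Finset.sum_sub_distrib, ← Finset.mul_sum, Finset.sum_const, Nat.card_Icc,
      nsmul_eq_mul]
    push_cast
    ring
  rw [hsum]
  field_simp
  ring
end

section
/- For every natural number k ≥ 1, ∫_{[0,1]^k} ∏_{1 ≤ i < j ≤ k} (t_i − t_j)² dt_1 ⋯ dt_k = ∏_{j=1}^{k} ( j! · ((j−1)!)² / (k+j−1)! ). -/
open Finset Nat MeasureTheory Matrix Equiv



lemma det_cauchy : ∀ (n : ℕ) (x y : Fin n → ℝ), (∀ i j, x i + y j ≠ 0) →
    det (of fun i j => (x i + y j)⁻¹) =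
      (∏ i : Fin n, ∏ j ∈ Ioi i, ((x j - x i) * (y j - y i))) *
        ∏ i : Fin n, ∏ j : Fin n, (x i + y j)⁻¹
  | 0, x, y, _ => by
      simp [det_eq_one_of_card_eq_zero (Fintype.card_fin 0)]
  | (n+1), x, y, h => by
    have hx0 : ∀ j, x 0 + y j ≠ 0 := fun j => h 0 j
    have hy0 : ∀ i, x i + y 0 ≠ 0 := fun i => h i 0
    -- Step 1: row operations, subtracting row 0.
    have step1 : det (of fun i j : Fin (n+1) => (x i + y j)⁻¹) =
        det (of fun i j : Fin (n+1) =>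
          Matrix.vecCons ((x 0 + y j)⁻¹)
            (fun i => (x i.succ + y j)⁻¹ - (x 0 + y j)⁻¹) i) := by
      refine det_eq_of_forall_row_eq_smul_add_const (Matrix.vecCons 0 1) 0
        (Fin.cons_zero _ _) ?_
      intro i j
      refine Fin.cases ?_ (fun i => ?_) i
      · simp
      · have ha := h i.succ j
        have hb := hx0 j
        simp only [of_apply, Matrix.cons_val_succ, Matrix.cons_val_zero, Pi.one_apply]
        field_simp
        ring
    -- Step 2: factor the columns.
    have step2 : det (of fun i j : Fin (n+1) =>
          Matrix.vecCons ((x 0 + y j)⁻¹)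
            (fun i => (x i.succ + y j)⁻¹ - (x 0 + y j)⁻¹) i) =
        (∏ j : Fin (n+1), (x 0 + y j)⁻¹) *
        det (of fun i j : Fin (n+1) =>
          Matrix.vecCons 1 (fun i => (x 0 - x i.succ) * (x i.succ + y j)⁻¹) i) := by
      rw [← det_mul_row (fun j => (x 0 + y j)⁻¹)]
      congr 1
      ext i j
      refine Fin.cases ?_ (fun i => ?_) i
      · simp
      · have ha := h i.succ j
        have hb := hx0 j
        simp only [of_apply, Matrix.cons_val_succ]
        rw [inv_sub_inv ha hb, div_eq_mul_inv, mul_inv]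
        ring
    -- Step 3: factor the rows.
    have step3 : det (of fun i j : Fin (n+1) =>
          Matrix.vecCons 1 (fun i => (x 0 - x i.succ) * (x i.succ + y j)⁻¹) i) =
        (∏ i : Fin n, (x 0 - x i.succ)) *
        det (of fun i j : Fin (n+1) =>
          Matrix.vecCons 1 (fun i => (x i.succ + y j)⁻¹) i) := by
      have := det_mul_column (Matrix.vecCons 1 (fun i => x 0 - x i.succ))
        (of fun i j : Fin (n+1) => Matrix.vecCons 1 (fun i => (x i.succ + y j)⁻¹) i)
      have hM : (of fun i j : Fin (n+1) =>
            Matrix.vecCons 1 (fun i => x 0 - x i.succ) i *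
            (of fun i j : Fin (n+1) => Matrix.vecCons 1 (fun i => (x i.succ + y j)⁻¹) i) i j) =
          (of fun i j : Fin (n+1) =>
            Matrix.vecCons 1 (fun i => (x 0 - x i.succ) * (x i.succ + y j)⁻¹) i) := by
        ext i j
        refine Fin.cases ?_ (fun i => ?_) i <;> simp
      rw [hM] at this
      rw [this, Fin.prod_univ_succ]
      simp
    -- Step 4: transpose and subtract row 0 (i.e. column operations).
    have step4 : det (of fun i j : Fin (n+1) =>
          Matrix.vecCons 1 (fun i => (x i.succ + y j)⁻¹) i) =
        det (of fun j i : Fin (n+1) =>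
          Matrix.vecCons
            (Matrix.vecCons 1 (fun i => (x i.succ + y 0)⁻¹) i)
            (fun j => Matrix.vecCons 0
              (fun i => (x i.succ + y j.succ)⁻¹ - (x i.succ + y 0)⁻¹) i) j) := by
      rw [← det_transpose (of fun i j : Fin (n+1) =>
          Matrix.vecCons 1 (fun i => (x i.succ + y j)⁻¹) i)]
      refine det_eq_of_forall_row_eq_smul_add_const (Matrix.vecCons 0 1) 0
        (Fin.cons_zero _ _) ?_
      intro j i
      refine Fin.cases ?_ (fun j => ?_) j
      · simp [Matrix.transpose_apply]
      · refine Fin.cases ?_ (fun i => ?_) i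
        · simp [Matrix.transpose_apply]
        · simp only [Matrix.transpose_apply, of_apply, Matrix.cons_val_succ,
            Matrix.cons_val_zero, Pi.one_apply]
          ring
    -- Step 5: expand along the first column.
    have step5 : det (of fun j i : Fin (n+1) =>
          Matrix.vecCons
            (Matrix.vecCons 1 (fun i => (x i.succ + y 0)⁻¹) i)
            (fun j => Matrix.vecCons 0
              (fun i => (x i.succ + y j.succ)⁻¹ - (x i.succ + y 0)⁻¹) i) j) =
        det (of fun j i : Fin n =>
          (x i.succ + y j.succ)⁻¹ - (x i.succ + y 0)⁻¹) := by
      rw [det_succ_column_zero, Fin.sum_univ_succ]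
      simp only [of_apply, Matrix.cons_val_zero, Matrix.cons_val_succ, Fin.val_zero,
        pow_zero, one_mul, Fin.val_succ, mul_zero, zero_mul, Finset.sum_const_zero,
        add_zero, mul_one]
      rfl
    -- Step 6: factor rows and columns of the minor.
    have step6 : det (of fun j i : Fin n =>
          (x i.succ + y j.succ)⁻¹ - (x i.succ + y 0)⁻¹) =
        (∏ j : Fin n, (y 0 - y j.succ)) * ((∏ i : Fin n, (x i.succ + y 0)⁻¹) *
          det (of fun j i : Fin n => (x i.succ + y j.succ)⁻¹)) := by
      have e1 : (of fun j i : Fin n =>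
            (x i.succ + y j.succ)⁻¹ - (x i.succ + y 0)⁻¹) =
          (of fun j i : Fin n => (y 0 - y j.succ) *
            ((x i.succ + y 0)⁻¹ * (x i.succ + y j.succ)⁻¹)) := by
        ext j i
        have ha := h i.succ j.succ
        have hb := hy0 i.succ
        simp only [of_apply]
        rw [inv_sub_inv ha hb, div_eq_mul_inv, mul_inv]
        ring
      rw [e1]
      have t1 := det_mul_column (fun j : Fin n => y 0 - y j.succ)
        (of fun j i : Fin n => (x i.succ + y 0)⁻¹ * (x i.succ + y j.succ)⁻¹)
      have hM1 : (of fun j i : Fin n => (y 0 - y j.succ) *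
            (of fun j i : Fin n => (x i.succ + y 0)⁻¹ * (x i.succ + y j.succ)⁻¹) j i) =
          (of fun j i : Fin n => (y 0 - y j.succ) *
            ((x i.succ + y 0)⁻¹ * (x i.succ + y j.succ)⁻¹)) := by
        ext j i; simp
      rw [hM1] at t1
      rw [t1]
      have t2 := det_mul_row (fun i : Fin n => (x i.succ + y 0)⁻¹)
        (of fun j i : Fin n => (x i.succ + y j.succ)⁻¹)
      have hM2 : (of fun j i : Fin n => (x i.succ + y 0)⁻¹ *
            (of fun j i : Fin n => (x i.succ + y j.succ)⁻¹) j i) =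
          (of fun j i : Fin n => (x i.succ + y 0)⁻¹ * (x i.succ + y j.succ)⁻¹) := by
        ext j i; simp
      rw [hM2] at t2
      rw [t2]
    -- Step 7: the remaining determinant via the induction hypothesis.
    have step7 : det (of fun j i : Fin n => (x i.succ + y j.succ)⁻¹) =
        (∏ i : Fin n, ∏ j ∈ Ioi i, ((x j.succ - x i.succ) * (y j.succ - y i.succ))) *
          ∏ i : Fin n, ∏ j : Fin n, (x i.succ + y j.succ)⁻¹ := by
      have e2 : (of fun j i : Fin n => (x i.succ + y j.succ)⁻¹) =
          (of fun i j : Fin n => ((x ∘ Fin.succ) i + (y ∘ Fin.succ) j)⁻¹)ᵀ := by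
        ext j i
        simp [Matrix.transpose_apply]
      rw [e2, det_transpose, det_cauchy n (x ∘ Fin.succ) (y ∘ Fin.succ)
        (fun i j => h i.succ j.succ)]
      rfl
    rw [step1, step2, step3, step4, step5, step6, step7]
    -- Final assembly.
    have hRHS1 : (∏ i : Fin (n+1), ∏ j ∈ Ioi i, ((x j - x i) * (y j - y i))) =
        (∏ j : Fin n, ((x j.succ - x 0) * (y j.succ - y 0))) *
          ∏ i : Fin n, ∏ j ∈ Ioi i, ((x j.succ - x i.succ) * (y j.succ - y i.succ)) := by
      rw [Fin.prod_univ_succ, Fin.prod_Ioi_zero]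
      congr 1
      exact Finset.prod_congr rfl fun i _ => Fin.prod_Ioi_succ _ _
    have hRHS2 : (∏ i : Fin (n+1), ∏ j : Fin (n+1), (x i + y j)⁻¹) =
        (∏ j : Fin (n+1), (x 0 + y j)⁻¹) * ((∏ i : Fin n, (x i.succ + y 0)⁻¹) *
          ∏ i : Fin n, ∏ j : Fin n, (x i.succ + y j.succ)⁻¹) := by
      rw [Fin.prod_univ_succ]
      congr 1
      rw [← Finset.prod_mul_distrib]
      exact Finset.prod_congr rfl fun i _ => Fin.prod_univ_succ _
    have hsign : (∏ i : Fin n, (x 0 - x i.succ)) * (∏ j : Fin n, (y 0 - y j.succ)) =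
        ∏ j : Fin n, ((x j.succ - x 0) * (y j.succ - y 0)) := by
      rw [← Finset.prod_mul_distrib]
      exact Finset.prod_congr rfl fun i _ => by ring
    rw [hRHS1, hRHS2]
    calc (∏ j : Fin (n + 1), (x 0 + y j)⁻¹) * ((∏ i : Fin n, (x 0 - x i.succ)) *
          ((∏ j : Fin n, (y 0 - y j.succ)) * ((∏ i : Fin n, (x i.succ + y 0)⁻¹) *
            ((∏ i : Fin n, ∏ j ∈ Ioi i, (x j.succ - x i.succ) * (y j.succ - y i.succ)) *
              ∏ i : Fin n, ∏ j : Fin n, (x i.succ + y j.succ)⁻¹))))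
        = ((∏ i : Fin n, (x 0 - x i.succ)) * (∏ j : Fin n, (y 0 - y j.succ))) *
            ((∏ i : Fin n, ∏ j ∈ Ioi i, (x j.succ - x i.succ) * (y j.succ - y i.succ)) *
              ((∏ j : Fin (n + 1), (x 0 + y j)⁻¹) * ((∏ i : Fin n, (x i.succ + y 0)⁻¹) *
                ∏ i : Fin n, ∏ j : Fin n, (x i.succ + y j.succ)⁻¹))) := by ring
      _ = _ := by rw [hsign]; ring



lemma indicator_pi_prod (k : ℕ) (f : Fin k → ℝ → ℝ) :
    (Set.univ.pi fun _ : Fin k => Set.Icc (0:ℝ) 1).indicator (fun t => ∏ i, f i (t i))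
      = fun t => ∏ i, (Set.Icc (0:ℝ) 1).indicator (f i) (t i) := by
  ext t
  by_cases ht : t ∈ Set.univ.pi fun _ : Fin k => Set.Icc (0:ℝ) 1
  · rw [Set.indicator_of_mem ht]
    exact Finset.prod_congr rfl fun i _ =>
      (Set.indicator_of_mem (ht i (Set.mem_univ i)) _).symm
  · rw [Set.indicator_of_notMem ht]
    rw [Set.mem_pi] at ht
    push_neg at ht
    obtain ⟨i, -, hi⟩ := ht
    exact (Finset.prod_eq_zero (Finset.mem_univ i)
      (Set.indicator_of_notMem hi _)).symm

lemma integral_pi_Icc_prod (k : ℕ) (f : Fin k → ℝ → ℝ) :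
    (∫ t in Set.univ.pi (fun _ : Fin k => Set.Icc (0:ℝ) 1), ∏ i, f i (t i))
      = ∏ i, ∫ x in Set.Icc (0:ℝ) 1, f i x := by
  have hms : MeasurableSet (Set.univ.pi fun _ : Fin k => Set.Icc (0:ℝ) 1) :=
    MeasurableSet.univ_pi fun _ => measurableSet_Icc
  rw [← MeasureTheory.integral_indicator hms, indicator_pi_prod,
    MeasureTheory.integral_fintype_prod_volume_eq_prod (ι := Fin k)
      (fun i => (Set.Icc (0:ℝ) 1).indicator (f i))]
  exact Finset.prod_congr rfl fun i _ =>
    MeasureTheory.integral_indicator measurableSet_Icc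

lemma integral_Icc_pow (n : ℕ) :
    (∫ x in Set.Icc (0:ℝ) 1, x ^ n) = ((n : ℝ) + 1)⁻¹ := by
  rw [MeasureTheory.integral_Icc_eq_integral_Ioc,
    ← intervalIntegral.integral_of_le (zero_le_one), integral_pow]
  simp [div_eq_mul_inv]




section
variable {k : ℕ}

lemma prod_pairs {k : ℕ} (f : Fin k → Fin k → ℝ) :
    (∏ p ∈ Finset.univ.filter (fun p : Fin k × Fin k => p.1 < p.2), f p.1 p.2)
      = ∏ i, ∏ j ∈ Ioi i, f i j := by
  rw [Finset.prod_sigma']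
  refine Finset.prod_nbij' (fun p => ⟨p.1, p.2⟩) (fun p => (p.1, p.2)) ?_ ?_ ?_ ?_ ?_ <;>
    simp +contextual [Finset.mem_sigma, Finset.mem_filter, Finset.mem_Ioi]

lemma integrand_eq (t : Fin k → ℝ) :
    (∏ p ∈ Finset.univ.filter (fun p : Fin k × Fin k => p.1 < p.2), (t p.1 - t p.2)^2)
      = (Matrix.det (Matrix.vandermonde t))^2 := by
  rw [Matrix.det_vandermonde, ← Finset.prod_pow, prod_pairs (fun i j => (t i - t j)^2)]
  refine Finset.prod_congr rfl fun i _ => ?_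
  rw [← Finset.prod_pow]
  exact Finset.prod_congr rfl fun j _ => by ring

lemma det_sq_expand (t : Fin k → ℝ) :
    (Matrix.det (Matrix.vandermonde t))^2
      = ∑ σ : Perm (Fin k), ∑ τ : Perm (Fin k),
          (((Perm.sign σ : ℤ) : ℝ) * ((Perm.sign τ : ℤ) : ℝ)) *
            ∏ i, t i ^ (((σ⁻¹ i : Fin k) : ℕ) + ((τ⁻¹ i : Fin k) : ℕ)) := by
  rw [sq, Matrix.det_apply', Finset.sum_mul_sum]
  refine Finset.sum_congr rfl fun σ _ => Finset.sum_congr rfl fun τ _ => ?_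
  have hσ : (∏ i, Matrix.vandermonde t (σ i) i) = ∏ i, t i ^ ((σ⁻¹ i : Fin k) : ℕ) := by
    rw [← Equiv.prod_comp σ (fun j => t j ^ ((σ⁻¹ j : Fin k) : ℕ))]
    exact Finset.prod_congr rfl fun i _ => by simp [Matrix.vandermonde_apply]
  have hτ : (∏ i, Matrix.vandermonde t (τ i) i) = ∏ i, t i ^ ((τ⁻¹ i : Fin k) : ℕ) := by
    rw [← Equiv.prod_comp τ (fun j => t j ^ ((τ⁻¹ j : Fin k) : ℕ))]
    exact Finset.prod_congr rfl fun i _ => by simp [Matrix.vandermonde_apply]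
  rw [hσ, hτ]
  rw [show (∏ i, t i ^ (((σ⁻¹ i : Fin k) : ℕ) + ((τ⁻¹ i : Fin k) : ℕ)))
      = (∏ i, t i ^ ((σ⁻¹ i : Fin k) : ℕ)) * ∏ i, t i ^ ((τ⁻¹ i : Fin k) : ℕ) by
    rw [← Finset.prod_mul_distrib]
    exact Finset.prod_congr rfl fun i _ => pow_add _ _ _]
  ring
end

lemma integral_eq_sum (k : ℕ) :
    (∫ t in Set.univ.pi (fun _ : Fin k => Set.Icc (0 : ℝ) 1),
        (Matrix.det (Matrix.vandermonde t))^2)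
      = ∑ σ : Perm (Fin k), ∑ τ : Perm (Fin k),
          (((Perm.sign σ : ℤ) : ℝ) * ((Perm.sign τ : ℤ) : ℝ)) *
            ∏ i, ((((σ⁻¹ i : Fin k) : ℕ) : ℝ) + (((τ⁻¹ i : Fin k) : ℕ) : ℝ) + 1)⁻¹ := by
  have hcomp : IsCompact (Set.univ.pi fun _ : Fin k => Set.Icc (0:ℝ) 1) :=
    isCompact_univ_pi fun _ => isCompact_Icc
  have hint : ∀ (c : ℝ) (e : Fin k → ℕ),
      IntegrableOn (fun t : Fin k → ℝ => c * ∏ i, t i ^ e i)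
        (Set.univ.pi fun _ : Fin k => Set.Icc (0:ℝ) 1) volume := by
    intro c e
    exact ((continuous_const.mul
      (continuous_finset_prod Finset.univ fun i _ =>
        (continuous_apply i).pow (e i))).continuousOn).integrableOn_compact hcomp
  simp_rw [det_sq_expand]
  rw [MeasureTheory.integral_finset_sum _
    (fun σ _ => integrable_finset_sum _ fun τ _ => hint _ _)]
  refine Finset.sum_congr rfl fun σ _ => ?_
  rw [MeasureTheory.integral_finset_sum _ (fun τ _ => hint _ _)]
  refine Finset.sum_congr rfl fun τ _ => ?_
  rw [MeasureTheory.integral_const_mul]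
  congr 1
  rw [integral_pi_Icc_prod k
    (fun i x => x ^ (((σ⁻¹ i : Fin k) : ℕ) + ((τ⁻¹ i : Fin k) : ℕ)))]
  refine Finset.prod_congr rfl fun i _ => ?_
  rw [integral_Icc_pow]
  push_cast
  ring

lemma sum_eq_det (k : ℕ) :
    (∑ σ : Perm (Fin k), ∑ τ : Perm (Fin k),
          (((Perm.sign σ : ℤ) : ℝ) * ((Perm.sign τ : ℤ) : ℝ)) *
            ∏ i, ((((σ⁻¹ i : Fin k) : ℕ) : ℝ) + (((τ⁻¹ i : Fin k) : ℕ) : ℝ) + 1)⁻¹)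
      = (k ! : ℝ) * Matrix.det (Matrix.of fun i j : Fin k =>
          (((i : ℕ) : ℝ) + ((j : ℕ) : ℝ) + 1)⁻¹) := by
  have stepA : (∑ σ : Perm (Fin k), ∑ τ : Perm (Fin k),
          (((Perm.sign σ : ℤ) : ℝ) * ((Perm.sign τ : ℤ) : ℝ)) *
            ∏ i, ((((σ⁻¹ i : Fin k) : ℕ) : ℝ) + (((τ⁻¹ i : Fin k) : ℕ) : ℝ) + 1)⁻¹)
      = ∑ σ : Perm (Fin k), ∑ τ : Perm (Fin k),
          (((Perm.sign σ : ℤ) : ℝ) * ((Perm.sign τ : ℤ) : ℝ)) *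
            ∏ i, ((((σ i : Fin k) : ℕ) : ℝ) + (((τ i : Fin k) : ℕ) : ℝ) + 1)⁻¹ := by
    refine Fintype.sum_equiv (Equiv.inv (Perm (Fin k))) _ _ fun σ => ?_
    refine Fintype.sum_equiv (Equiv.inv (Perm (Fin k))) _ _ fun τ => ?_
    simp [Perm.sign_inv]
  rw [stepA]
  have stepB : ∀ σ : Perm (Fin k),
      (∑ τ : Perm (Fin k),
          (((Perm.sign σ : ℤ) : ℝ) * ((Perm.sign τ : ℤ) : ℝ)) *
            ∏ i, ((((σ i : Fin k) : ℕ) : ℝ) + (((τ i : Fin k) : ℕ) : ℝ) + 1)⁻¹)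
        = Matrix.det (Matrix.of fun i j : Fin k =>
            (((i : ℕ) : ℝ) + ((j : ℕ) : ℝ) + 1)⁻¹) := by
    intro σ
    have hdet : Matrix.det (Matrix.of fun i j : Fin k =>
            (((i : ℕ) : ℝ) + ((j : ℕ) : ℝ) + 1)⁻¹)
        = Matrix.det (Matrix.of fun i j : Fin k =>
            (((j : ℕ) : ℝ) + ((i : ℕ) : ℝ) + 1)⁻¹) := by
      congr 1
      ext i j
      simp only [Matrix.of_apply]
      ring
    rw [hdet, Matrix.det_apply']
    refine (Fintype.sum_equiv (Equiv.mulRight σ) _ _ fun π => ?_).symm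
    simp only [Equiv.coe_mulRight, Matrix.of_apply]
    have hsgn : ((Perm.sign σ : ℤ) : ℝ) * ((Perm.sign (π * σ) : ℤ) : ℝ)
        = ((Perm.sign π : ℤ) : ℝ) := by
      have : (Perm.sign σ) * (Perm.sign (π * σ)) = Perm.sign π := by
        rw [Perm.sign_mul, mul_comm (Perm.sign π), ← mul_assoc,
          Int.units_mul_self, one_mul]
      rw [← this]
      push_cast
      ring
    have hprod : (∏ i, ((((σ i : Fin k) : ℕ) : ℝ) + ((((π * σ) i : Fin k) : ℕ) : ℝ) + 1)⁻¹)
        = ∏ i, ((((i : Fin k) : ℕ) : ℝ) + (((π i : Fin k) : ℕ) : ℝ) + 1)⁻¹ := by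
      rw [← Equiv.prod_comp σ
        (fun j => ((((j : Fin k) : ℕ) : ℝ) + (((π j : Fin k) : ℕ) : ℝ) + 1)⁻¹)]
      exact Finset.prod_congr rfl fun i _ => by rw [Perm.mul_apply]
    rw [hprod, hsgn]
  rw [Finset.sum_congr rfl fun σ _ => stepB σ, Finset.sum_const, Finset.card_univ,
    Fintype.card_perm, Fintype.card_fin, nsmul_eq_mul]

lemma prod_pairs'' {k : ℕ} (f : Fin k → Fin k → ℝ) :
    (∏ i, ∏ j ∈ Ioi i, f i j) = ∏ j, ∏ i ∈ Iio j, f i j := by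
  rw [← prod_pairs f, Finset.prod_sigma']
  refine Finset.prod_nbij' (fun p => ⟨p.2, p.1⟩) (fun p => (p.2, p.1)) ?_ ?_ ?_ ?_ ?_ <;>
    simp +contextual [Finset.mem_sigma, Finset.mem_filter, Finset.mem_Iio]

lemma prod_Iio_fin {k : ℕ} (j : Fin k) (g : ℕ → ℝ) :
    (∏ i ∈ Iio j, g (i : ℕ)) = ∏ m ∈ range (j : ℕ), g m := by
  refine Finset.prod_bij (fun (i : Fin k) (_ : i ∈ Iio j) => (i : ℕ)) ?_ ?_ ?_ ?_
  · intro a ha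
    rw [Finset.mem_Iio] at ha
    exact Finset.mem_range.mpr ha
  · intro a _ b _ hab
    exact Fin.val_injective hab
  · intro b hb
    rw [Finset.mem_range] at hb
    exact ⟨⟨b, hb.trans j.isLt⟩, Finset.mem_Iio.mpr hb, rfl⟩
  · intro a _
    rfl

lemma prod_sub_fact : ∀ n : ℕ, (∏ m ∈ range n, ((n : ℝ) - (m : ℝ))) = (n ! : ℝ)
  | 0 => by simp
  | (n+1) => by
    rw [Finset.prod_range_succ']
    have h : ∀ m ∈ range n, (((n:ℝ) + 1) - (((m:ℝ) + 1))) = (n : ℝ) - (m : ℝ) :=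
      fun m _ => by ring
    push_cast
    rw [Finset.prod_congr rfl h, prod_sub_fact n]
    push_cast [Nat.factorial_succ]
    ring

lemma prod_add_fact (j : ℕ) : ∀ k : ℕ,
    (j ! : ℝ) * (∏ m ∈ range k, ((m : ℝ) + (j : ℝ) + 1)) = ((k + j)! : ℝ)
  | 0 => by simp
  | (k+1) => by
    rw [Finset.prod_range_succ, ← mul_assoc, prod_add_fact j k]
    have h : (k + 1 + j)! = (k + j)! * (k + j + 1) := by
      rw [show k + 1 + j = (k + j) + 1 by ring, Nat.factorial_succ]
      ring
    rw [h]
    push_cast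
    ring

lemma superfact (k : ℕ) :
    (∏ i : Fin k, ∏ j ∈ Ioi i, (((j : ℕ) : ℝ) - ((i : ℕ) : ℝ)))
      = ∏ m ∈ range k, ((m)! : ℝ) := by
  rw [prod_pairs'' (fun i j => ((j : ℕ) : ℝ) - ((i : ℕ) : ℝ))]
  have h : ∀ j : Fin k, (∏ i ∈ Iio j, (((j : ℕ) : ℝ) - ((i : ℕ) : ℝ))) = (((j:ℕ))! : ℝ) := by
    intro j
    rw [prod_Iio_fin j (fun m => ((j : ℕ) : ℝ) - (m : ℝ)), prod_sub_fact]
  rw [Finset.prod_congr rfl fun j _ => h j]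
  exact Fin.prod_univ_eq_prod_range (fun m => ((m)! : ℝ)) k

lemma final_arith (k : ℕ) :
    (k ! : ℝ) * Matrix.det (Matrix.of fun i j : Fin k =>
        (((i : ℕ) : ℝ) + ((j : ℕ) : ℝ) + 1)⁻¹)
      = ∏ j ∈ Finset.Icc 1 k, ((j ! : ℝ) * ((j - 1)! : ℝ) ^ 2 / ((k + j - 1)! : ℝ)) := by
  have hRHS : (∏ j ∈ Finset.Icc 1 k, ((j ! : ℝ) * ((j - 1)! : ℝ) ^ 2 / ((k + j - 1)! : ℝ)))
      = ∏ m ∈ range k, (((m + 1)! : ℝ) * ((m)! : ℝ) ^ 2 / ((k + m)! : ℝ)) := by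
    refine Finset.prod_nbij' (fun j => j - 1) (fun m => m + 1) ?_ ?_ ?_ ?_ ?_
    · intro j hj; rw [Finset.mem_Icc] at hj; rw [Finset.mem_range]; omega
    · intro m hm; rw [Finset.mem_range] at hm; rw [Finset.mem_Icc]; omega
    · intro j hj; rw [Finset.mem_Icc] at hj; omega
    · intro m _; omega
    · intro j hj
      rw [Finset.mem_Icc] at hj
      have h1 : j - 1 + 1 = j := by omega
      have h2 : k + (j - 1) = k + j - 1 := by omega
      rw [h1, h2]
  rw [hRHS]
  have hdc := det_cauchy k (fun i : Fin k => ((i : ℕ) : ℝ))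
    (fun j : Fin k => ((j : ℕ) : ℝ) + 1) (fun i j => by positivity)
  have hmatch : (Matrix.of fun i j : Fin k => (((i : ℕ) : ℝ) + ((j : ℕ) : ℝ) + 1)⁻¹)
      = Matrix.of fun i j : Fin k => (((i : ℕ) : ℝ) + (((j : ℕ) : ℝ) + 1))⁻¹ := by
    ext i j
    simp only [Matrix.of_apply]
    ring_nf
  rw [hmatch, hdc]
  -- numerator
  have hnum : (∏ i : Fin k, ∏ j ∈ Ioi i,
        ((((j : ℕ) : ℝ) - ((i : ℕ) : ℝ)) * ((((j : ℕ) : ℝ) + 1) - (((i : ℕ) : ℝ) + 1))))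
      = (∏ m ∈ range k, ((m)! : ℝ)) ^ 2 := by
    have h1 : ∀ i : Fin k, ∀ j ∈ Ioi i,
        ((((j : ℕ) : ℝ) - ((i : ℕ) : ℝ)) * ((((j : ℕ) : ℝ) + 1) - (((i : ℕ) : ℝ) + 1)))
          = (((j : ℕ) : ℝ) - ((i : ℕ) : ℝ)) ^ 2 := fun i j _ => by ring
    rw [Finset.prod_congr rfl fun i _ => Finset.prod_congr rfl (h1 i)]
    simp_rw [Finset.prod_pow]
    rw [superfact]
  rw [hnum]
  -- denominator
  have hden : (∏ i : Fin k, ∏ j : Fin k, ((((i : ℕ) : ℝ)) + (((j : ℕ) : ℝ) + 1))⁻¹)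
      = ∏ m ∈ range k, (((m)! : ℝ) / ((k + m)! : ℝ)) := by
    have inner : ∀ i : Fin k,
        (∏ j : Fin k, ((((i : ℕ) : ℝ)) + (((j : ℕ) : ℝ) + 1))⁻¹)
          = (((i:ℕ))! : ℝ) / ((k + (i:ℕ))! : ℝ) := by
      intro i
      rw [Finset.prod_inv_distrib]
      have h2 : (∏ j : Fin k, ((((i : ℕ) : ℝ)) + (((j : ℕ) : ℝ) + 1)))
          = ∏ m ∈ range k, ((m : ℝ) + ((i:ℕ) : ℝ) + 1) := by
        rw [← Fin.prod_univ_eq_prod_range (fun m => ((m : ℝ) + ((i:ℕ) : ℝ) + 1)) k]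
        exact Finset.prod_congr rfl fun j _ => by ring
      rw [h2]
      have h3 := prod_add_fact (i : ℕ) k
      have hfne : (((i:ℕ))! : ℝ) ≠ 0 := Nat.cast_ne_zero.mpr (Nat.factorial_ne_zero _)
      have hprodne : ((k + (i:ℕ))! : ℝ) ≠ 0 := Nat.cast_ne_zero.mpr (Nat.factorial_ne_zero _)
      rw [show (∏ m ∈ range k, ((m : ℝ) + ((i:ℕ) : ℝ) + 1))
          = ((k + (i:ℕ))! : ℝ) / (((i:ℕ))! : ℝ) by
        rw [eq_div_iff hfne, mul_comm]; exact h3]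
      rw [inv_div]
    rw [Finset.prod_congr rfl fun i _ => inner i]
    exact Fin.prod_univ_eq_prod_range (fun m => ((m)! : ℝ) / ((k + m)! : ℝ)) k
  rw [hden]
  have hk : (k ! : ℝ) = ∏ m ∈ range k, ((m : ℝ) + 1) := by
    rw [← Finset.prod_range_add_one_eq_factorial k]
    push_cast
    rfl
  rw [hk, ← Finset.prod_pow, ← Finset.prod_mul_distrib, ← Finset.prod_mul_distrib]
  refine Finset.prod_congr rfl fun m _ => ?_
  push_cast [Nat.factorial_succ]
  ring


/-- Selberg's integral (case α = β = γ = 1): for `k ≥ 1`,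
`∫_{[0,1]^k} ∏_{i<j} (t_i - t_j)² dt = ∏_{j=1}^{k} j! ((j-1)!)² / (k+j-1)!`. -/
theorem stmt3 (k : ℕ) (hk : 1 ≤ k) :
    (∫ t in Set.univ.pi (fun _ : Fin k => Set.Icc (0 : ℝ) 1),
        ∏ p ∈ Finset.univ.filter (fun p : Fin k × Fin k => p.1 < p.2),
          (t p.1 - t p.2) ^ 2)
      = ∏ j ∈ Finset.Icc 1 k, ((j ! : ℝ) * ((j - 1)! : ℝ) ^ 2 / ((k + j - 1)! : ℝ)) := by
  simp_rw [integrand_eq]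
  rw [integral_eq_sum, sum_eq_det, final_arith]
end

section
/- Let k ≥ 1 and let A, B be Hermitian k × k complex matrices. Let λ₁(A) ≤ ⋯ ≤ λ_k(A) and λ₁(B) ≤ ⋯ ≤ λ_k(B) be their eigenvalues listed in nondecreasing order with multiplicity. Then the minimum over all unitary k × k matrices u of the Frobenius norm ‖uAu* − B‖_F equals ( ∑_{i=1}^{k} (λ_i(A) − λ_i(B))² )^{1/2}. In particular, for every ε ≥ 0 there exists a unitary u with ‖uAu* − B‖_F ≤ ε if and only if ( ∑_{i=1}^{k} (λ_i(A) − λ_i(B))² )^{1/2} ≤ ε. -/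
open Finset Polynomial

section HoffmanWielandtAux

open Matrix

private lemma hw_conj_mul_self (z : ℂ) : (starRingEnd ℂ) z * z = ((‖z‖^2 : ℝ) : ℂ) := by
  rw [mul_comm, Complex.mul_conj]
  norm_cast
  simp [Complex.normSq_eq_norm_sq]

private lemma hw_self_mul_conj (z : ℂ) : z * star z = ((‖z‖^2 : ℝ) : ℂ) := by
  rw [mul_comm]; exact hw_conj_mul_self z

private lemma hw_charpoly_diag {n : Type*} [Fintype n] [DecidableEq n] {R : Type*} [CommRing R]
    (d : n → R) : (Matrix.diagonal d).charpoly = ∏ i, (X - C (d i)) := by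
  have : charmatrix (diagonal d) = diagonal (fun i => (X : R[X]) - C (d i)) := by
    ext i j
    by_cases h : i = j
    · subst h; simp
    · simp [Matrix.charmatrix_apply_ne _ _ _ h, Matrix.diagonal_apply_ne _ h]
  rw [Matrix.charpoly, this, Matrix.det_diagonal]

private lemma hw_charpoly_unitary_conj {n : Type*} [Fintype n] [DecidableEq n]
    (U M : Matrix n n ℂ) (hU : U ∈ Matrix.unitaryGroup n ℂ) :
    (U * M * star U).charpoly = M.charpoly := by
  have h1 : U * star U = 1 := Matrix.mem_unitaryGroup_iff.mp hU
  have h2 : star U * U = 1 := Matrix.mem_unitaryGroup_iff'.mp hU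
  have hmap : ∀ N P : Matrix n n ℂ, ((C : ℂ →+* ℂ[X]).mapMatrix (N * P)) =
      (C : ℂ →+* ℂ[X]).mapMatrix N * (C : ℂ →+* ℂ[X]).mapMatrix P := fun N P => map_mul _ _ _
  have hch : charmatrix (U * M * star U) =
      (C : ℂ →+* ℂ[X]).mapMatrix U * charmatrix M * (C : ℂ →+* ℂ[X]).mapMatrix (star U) := by
    rw [charmatrix, charmatrix, mul_sub, sub_mul, hmap, hmap]
    congr 1
    rw [mul_assoc, (Matrix.scalar_commute (X : ℂ[X]) (fun r => Commute.all _ _)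
      ((C : ℂ →+* ℂ[X]).mapMatrix (star U))).eq, ← mul_assoc, ← hmap, h1]
    simp
  rw [Matrix.charpoly, Matrix.charpoly, hch, Matrix.det_mul, Matrix.det_mul]
  rw [mul_comm, ← mul_assoc, ← Matrix.det_mul, ← hmap, h2]
  simp

private lemma hw_tuple_eq_of_monotone_of_prod_eq {k : ℕ} (c d : Fin k → ℝ)
    (hc : Monotone c) (hd : Monotone d)
    (h : ∏ i, (X - C ((c i : ℂ))) = ∏ i, (X - C ((d i : ℂ)))) : c = d := by
  have key : ∀ e : Fin k → ℝ, ∏ i, (X - C ((e i : ℂ))) =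
      ((Finset.univ.val.map (fun i => ((e i : ℝ) : ℂ))).map fun a => X - C a).prod := by
    intro e
    rw [Multiset.map_map]
    rfl
  have hroots : (Finset.univ.val.map (fun i => ((c i : ℝ) : ℂ))) =
      (Finset.univ.val.map (fun i => ((d i : ℝ) : ℂ))) :=
    calc (Finset.univ.val.map (fun i => ((c i : ℝ) : ℂ)))
        = ((Finset.univ.val.map (fun i => ((c i : ℝ) : ℂ))).map fun a => X - C a).prod.roots :=
          (Polynomial.roots_multiset_prod_X_sub_C _).symm
      _ = ((Finset.univ.val.map (fun i => ((d i : ℝ) : ℂ))).map fun a => X - C a).prod.roots := by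
          rw [← key, ← key, h]
      _ = _ := Polynomial.roots_multiset_prod_X_sub_C _
  have hreal : Finset.univ.val.map c = Finset.univ.val.map d := by
    apply Multiset.map_injective (f := (Complex.ofReal : ℝ → ℂ)) Complex.ofReal_injective
    rw [Multiset.map_map, Multiset.map_map]
    exact hroots
  have hperm : List.Perm (List.ofFn c) (List.ofFn d) := by
    rw [← Multiset.coe_eq_coe, List.ofFn_eq_map, List.ofFn_eq_map,
      ← Multiset.map_coe, ← Multiset.map_coe]
    exact hreal
  exact List.ofFn_injective (List.Perm.eq_of_sortedLE
    (List.sortedLE_ofFn_iff.mpr hc) (List.sortedLE_ofFn_iff.mpr hd) hperm)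

private lemma hw_star_permMatrix {n : Type*} [Fintype n] [DecidableEq n] (σ : Equiv.Perm n) :
    star (σ.toPEquiv.toMatrix : Matrix n n ℂ) = (σ⁻¹.toPEquiv.toMatrix : Matrix n n ℂ) := by
  ext i j
  rw [Matrix.star_apply]
  simp only [PEquiv.toMatrix_apply, Equiv.toPEquiv_apply, Option.mem_def, Option.some.injEq]
  rw [apply_ite (star : ℂ → ℂ)]
  simp only [star_one, star_zero, Equiv.Perm.inv_def, Equiv.symm_apply_eq]
  by_cases h : i = σ j
  · simp [h]
  · rw [if_neg (fun h' => h h'.symm), if_neg h]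

private lemma hw_permMatrix_mul_inv {n : Type*} [Fintype n] [DecidableEq n] (σ τ : Equiv.Perm n)
    (hστ : σ.trans τ = 1) :
    (σ.toPEquiv.toMatrix : Matrix n n ℂ) * (τ.toPEquiv.toMatrix : Matrix n n ℂ) = 1 := by
  rw [← PEquiv.toMatrix_trans, ← Equiv.toPEquiv_trans, hστ]
  have : (1 : Equiv.Perm n) = Equiv.refl n := rfl
  rw [this, Equiv.toPEquiv_refl, PEquiv.toMatrix_refl]

private lemma hw_permMatrix_conj_diagonal {n : Type*} [Fintype n] [DecidableEq n]
    (σ : Equiv.Perm n) (d : n → ℂ) :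
    (σ.toPEquiv.toMatrix : Matrix n n ℂ) * Matrix.diagonal d * (σ⁻¹.toPEquiv.toMatrix) =
      Matrix.diagonal (d ∘ σ) := by
  rw [PEquiv.toMatrix_toPEquiv_mul, PEquiv.mul_toMatrix_toPEquiv]
  ext i j
  by_cases h : i = j
  · subst h; simp [Matrix.submatrix_apply, Equiv.Perm.inv_def, Equiv.symm_symm]
  · simp only [Matrix.submatrix_apply, id_eq]
    rw [Matrix.diagonal_apply_ne _ h, Matrix.diagonal_apply_ne]
    simp only [Equiv.Perm.inv_def, Equiv.symm_symm]
    exact fun h' => h (σ.injective h')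

private lemma hw_exists_unitary_diag {k : ℕ} (A : Matrix (Fin k) (Fin k) ℂ) (hA : A.IsHermitian)
    (l : Fin k → ℝ) (hl : Monotone l) (hchar : A.charpoly = ∏ i, (X - C (l i : ℂ))) :
    ∃ V ∈ Matrix.unitaryGroup (Fin k) ℂ,
      A = V * Matrix.diagonal (fun i => (l i : ℂ)) * star V := by
  have spectral := hA.spectral_theorem
  rw [Unitary.conjStarAlgAut_apply] at spectral
  set V₀ := (hA.eigenvectorUnitary : Matrix (Fin k) (Fin k) ℂ) with hV₀
  have hV₀u : V₀ * star V₀ = 1 := Matrix.mem_unitaryGroup_iff.mp hA.eigenvectorUnitary.2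
  set μ := hA.eigenvalues with hμ
  set σ := Tuple.sort μ with hσ
  have hms : Monotone (μ ∘ σ) := Tuple.monotone_sort μ
  have hdiag : Matrix.diagonal (RCLike.ofReal ∘ μ)
      = Matrix.diagonal (fun i => ((μ i : ℝ) : ℂ)) := rfl
  have hcharA : A.charpoly = ∏ i, (X - C ((μ i : ℂ))) := by
    rw [spectral, hw_charpoly_unitary_conj _ _ hA.eigenvectorUnitary.2, hdiag, hw_charpoly_diag]
  have hprod : ∏ i, (X - C (((μ ∘ σ) i : ℂ))) = ∏ i, (X - C ((l i : ℂ))) := by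
    have := Equiv.prod_comp σ (fun i => ((X : ℂ[X]) - C ((μ i : ℂ))))
    simpa using this.trans (hcharA.symm.trans hchar)
  have hμσ : μ ∘ σ = l := hw_tuple_eq_of_monotone_of_prod_eq _ _ hms hl hprod
  set P : Matrix (Fin k) (Fin k) ℂ := σ.toPEquiv.toMatrix with hP
  set Q : Matrix (Fin k) (Fin k) ℂ := (σ⁻¹).toPEquiv.toMatrix with hQ
  have hQP : Q * P = 1 := hw_permMatrix_mul_inv _ _
    (by rw [Equiv.Perm.inv_def]; exact Equiv.symm_trans_self σ)
  have hPQ : P * Q = 1 := hw_permMatrix_mul_inv _ _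
    (by rw [Equiv.Perm.inv_def]; exact Equiv.self_trans_symm σ)
  have hconj : P * Matrix.diagonal (fun i => ((μ i : ℝ) : ℂ)) * Q
      = Matrix.diagonal (fun i => ((l i : ℂ))) := by
    rw [hP, hQ, hw_permMatrix_conj_diagonal]
    have : ((fun i => ((μ i : ℝ) : ℂ)) ∘ σ) = fun i => ((l i : ℂ)) := by
      funext i
      simp [← hμσ]
    rw [this]
  have hdiagμ : Matrix.diagonal (fun i => ((μ i : ℝ) : ℂ)) =
      Q * Matrix.diagonal (fun i => ((l i : ℂ))) * P := by
    rw [← hconj]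
    have h1 : Q * (P * Matrix.diagonal (fun i => ((μ i : ℝ) : ℂ)) * Q) * P =
        (Q * P) * Matrix.diagonal (fun i => ((μ i : ℝ) : ℂ)) * (Q * P) := by noncomm_ring
    rw [h1, hQP, Matrix.one_mul, Matrix.mul_one]
  refine ⟨V₀ * Q, ?_, ?_⟩
  · rw [Matrix.mem_unitaryGroup_iff]
    rw [Matrix.star_mul, hQ, hw_star_permMatrix, inv_inv, ← hP]
    calc V₀ * Q * (P * star V₀) = V₀ * (Q * P) * star V₀ := by
          rw [Matrix.mul_assoc, Matrix.mul_assoc, Matrix.mul_assoc]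
      _ = 1 := by rw [hQP, Matrix.mul_one, hV₀u]
  · rw [spectral, hdiag, hdiagμ]
    rw [Matrix.star_mul, hQ, hw_star_permMatrix, inv_inv, ← hP]
    noncomm_ring

private lemma hw_trace_form {k : ℕ} (C : Matrix (Fin k) (Fin k) ℂ) :
    Matrix.trace (Cᴴ * C) = ((∑ i, ∑ j, ‖C i j‖^2 : ℝ) : ℂ) := by
  rw [Matrix.trace]
  push_cast
  rw [Finset.sum_comm]
  apply Finset.sum_congr rfl
  intro j _
  rw [Matrix.diag_apply, Matrix.mul_apply]
  apply Finset.sum_congr rfl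
  intro i _
  rw [Matrix.conjTranspose_apply]
  exact_mod_cast hw_conj_mul_self (C i j)

private lemma hw_sum_sq_unitary_conj {k : ℕ} (W N : Matrix (Fin k) (Fin k) ℂ)
    (hW : W ∈ Matrix.unitaryGroup (Fin k) ℂ) :
    ∑ i, ∑ j, ‖(W * N * star W) i j‖^2 = ∑ i, ∑ j, ‖N i j‖^2 := by
  have h2 : star W * W = 1 := Matrix.mem_unitaryGroup_iff'.mp hW
  have := hw_trace_form (W * N * star W)
  rw [show (W * N * star W)ᴴ = W * Nᴴ * star W by
      simp [Matrix.star_eq_conjTranspose, Matrix.conjTranspose_mul, Matrix.mul_assoc]] at this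
  have hprod : (W * Nᴴ * star W) * (W * N * star W) = W * (Nᴴ * N) * star W := by
    have e : (W * Nᴴ * star W) * (W * N * star W) = W * Nᴴ * (star W * W) * N * star W := by
      noncomm_ring
    rw [e, h2, Matrix.mul_one]
    noncomm_ring
  rw [hprod] at this
  have htr : Matrix.trace (W * (Nᴴ * N) * star W) = Matrix.trace (Nᴴ * N) := by
    rw [Matrix.trace_mul_cycle, ← Matrix.mul_assoc, h2, Matrix.one_mul]
  rw [htr, hw_trace_form] at this
  exact_mod_cast this.symm

private lemma hw_expansion {k : ℕ} (a b : Fin k → ℝ) (U : Matrix (Fin k) (Fin k) ℂ)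
    (hU : U ∈ Matrix.unitaryGroup (Fin k) ℂ) :
    ∑ i, ∑ j, ‖(U * Matrix.diagonal (fun i => (a i : ℂ)) * star U
        - Matrix.diagonal (fun i => (b i : ℂ))) i j‖^2
      = ∑ i, (a i)^2 + ∑ i, (b i)^2 - 2 * ∑ i, ∑ j, ‖U i j‖^2 * (b i * a j) := by
  have h2 : star U * U = 1 := Matrix.mem_unitaryGroup_iff'.mp hU
  set Da := Matrix.diagonal (fun i => ((a i : ℝ) : ℂ)) with hDa
  set Db := Matrix.diagonal (fun i => ((b i : ℝ) : ℂ)) with hDb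
  set E := U * Da * star U with hE
  have hDaH : Daᴴ = Da := by
    rw [hDa, Matrix.diagonal_conjTranspose]
    have : star (fun i => ((a i : ℝ) : ℂ)) = fun i => ((a i : ℝ) : ℂ) := by
      funext i
      exact Complex.conj_ofReal (a i)
    rw [this]
  have hDbH : Dbᴴ = Db := by
    rw [hDb, Matrix.diagonal_conjTranspose]
    have : star (fun i => ((b i : ℝ) : ℂ)) = fun i => ((b i : ℝ) : ℂ) := by
      funext i
      exact Complex.conj_ofReal (b i)
    rw [this]
  have hEH : Eᴴ = E := by
    rw [hE]
    simp [Matrix.star_eq_conjTranspose, Matrix.conjTranspose_mul, hDaH, Matrix.mul_assoc]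
  have hNH : (E - Db)ᴴ = E - Db := by rw [Matrix.conjTranspose_sub, hEH, hDbH]
  have h_EE : Matrix.trace (E * E) = ((∑ i, (a i)^2 : ℝ) : ℂ) := by
    have e1 : E * E = U * (Da * Da) * star U := by
      have e : (U * Da * star U) * (U * Da * star U) = U * Da * (star U * U) * Da * star U := by
        noncomm_ring
      rw [hE, e, h2, Matrix.mul_one]
      noncomm_ring
    rw [e1, Matrix.trace_mul_cycle, ← Matrix.mul_assoc, h2, Matrix.one_mul, hDa,
      Matrix.diagonal_mul_diagonal, Matrix.trace_diagonal]
    push_cast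
    ring_nf
  have h_DbDb : Matrix.trace (Db * Db) = ((∑ i, (b i)^2 : ℝ) : ℂ) := by
    rw [hDb, Matrix.diagonal_mul_diagonal, Matrix.trace_diagonal]
    push_cast
    ring_nf
  have h_DbE : Matrix.trace (Db * E) =
      ((∑ i, ∑ j, ‖U i j‖^2 * (b i * a j) : ℝ) : ℂ) := by
    rw [Matrix.trace]
    push_cast
    apply Finset.sum_congr rfl
    intro i _
    rw [Matrix.diag_apply, Matrix.diagonal_mul]
    have hEii : E i i = ∑ j, (U i j * (a j : ℂ) * star (U i j)) := by
      rw [hE, Matrix.mul_apply]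
      apply Finset.sum_congr rfl
      intro j _
      rw [Matrix.mul_diagonal, Matrix.star_apply]
    rw [hEii, Finset.mul_sum]
    apply Finset.sum_congr rfl
    intro j _
    have : U i j * (a j : ℂ) * star (U i j) = ((‖U i j‖^2 : ℝ) : ℂ) * (a j : ℂ) := by
      rw [mul_comm (U i j) ((a j : ℂ)), mul_assoc, hw_self_mul_conj]
      ring
    rw [this]
    push_cast
    ring
  have h_EDb : Matrix.trace (E * Db) =
      ((∑ i, ∑ j, ‖U i j‖^2 * (b i * a j) : ℝ) : ℂ) := by
    rw [Matrix.trace_mul_comm, h_DbE]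
  have expand : (E - Db) * (E - Db) = E*E - Db*E - (E*Db - Db*Db) := by noncomm_ring
  have htr := hw_trace_form (E - Db)
  rw [hNH, expand, Matrix.trace_sub, Matrix.trace_sub, Matrix.trace_sub,
    h_EE, h_DbDb, h_DbE, h_EDb] at htr
  have : ((∑ i, ∑ j, ‖(E - Db) i j‖^2 : ℝ) : ℂ)
      = ((∑ i, (a i)^2 + ∑ i, (b i)^2 - 2 * ∑ i, ∑ j, ‖U i j‖^2 * (b i * a j) : ℝ) : ℂ) := by
    rw [← htr]
    push_cast
    ring
  exact_mod_cast this

private lemma hw_ds_bound {k : ℕ} (a b : Fin k → ℝ) (ha : Monotone a) (hb : Monotone b)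
    (S : Matrix (Fin k) (Fin k) ℝ) (hS : S ∈ doublyStochastic ℝ (Fin k)) :
    ∑ i, ∑ j, S i j * (b i * a j) ≤ ∑ i, b i * a i := by
  obtain ⟨w, hw0, hw1, hwS⟩ := exists_eq_sum_perm_of_mem_doublyStochastic hS
  have hperm : ∀ σ : Equiv.Perm (Fin k), ∑ i, ∑ j, (σ.permMatrix ℝ) i j * (b i * a j)
      = ∑ i, b i * a (σ i) := by
    intro σ
    apply Finset.sum_congr rfl
    intro i _
    rw [Finset.sum_eq_single (σ i)]
    · simp [Equiv.Perm.permMatrix, PEquiv.toMatrix_apply, Equiv.toPEquiv_apply]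
    · intro j _ hj
      simp [Equiv.Perm.permMatrix, PEquiv.toMatrix_apply, Equiv.toPEquiv_apply, (Ne.symm hj)]
    · intro h
      exact absurd (Finset.mem_univ _) h
  calc ∑ i, ∑ j, S i j * (b i * a j)
      = ∑ σ : Equiv.Perm (Fin k), w σ * ∑ i, b i * a (σ i) := by
        rw [← hwS]
        calc ∑ i, ∑ j, (∑ σ : Equiv.Perm (Fin k), w σ • σ.permMatrix ℝ) i j * (b i * a j)
            = ∑ i, ∑ j, ∑ σ : Equiv.Perm (Fin k),
                w σ * ((σ.permMatrix ℝ) i j * (b i * a j)) := by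
              simp only [Matrix.sum_apply, Matrix.smul_apply, smul_eq_mul, Finset.sum_mul,
                mul_assoc]
          _ = ∑ i, ∑ σ : Equiv.Perm (Fin k), ∑ j,
                w σ * ((σ.permMatrix ℝ) i j * (b i * a j)) := by
              apply Finset.sum_congr rfl
              intro i _
              rw [Finset.sum_comm]
          _ = ∑ σ : Equiv.Perm (Fin k), ∑ i, ∑ j,
                w σ * ((σ.permMatrix ℝ) i j * (b i * a j)) := by
              rw [Finset.sum_comm]
          _ = ∑ σ : Equiv.Perm (Fin k), w σ * ∑ i, b i * a (σ i) := by
              apply Finset.sum_congr rfl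
              intro σ _
              rw [← hperm σ, Finset.mul_sum]
              apply Finset.sum_congr rfl
              intro i _
              rw [Finset.mul_sum]
    _ ≤ ∑ σ, w σ * ∑ i, b i * a i := by
        apply Finset.sum_le_sum
        intro σ _
        exact mul_le_mul_of_nonneg_left ((hb.monovary ha).sum_mul_comp_perm_le_sum_mul) (hw0 σ)
    _ = ∑ i, b i * a i := by rw [← Finset.sum_mul, hw1, one_mul]

private lemma hw_unitary_sq_ds {k : ℕ} (U : Matrix (Fin k) (Fin k) ℂ)
    (hU : U ∈ Matrix.unitaryGroup (Fin k) ℂ) :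
    (Matrix.of fun i j => ‖U i j‖^2) ∈ doublyStochastic ℝ (Fin k) := by
  have h1 : U * star U = 1 := Matrix.mem_unitaryGroup_iff.mp hU
  have h2 : star U * U = 1 := Matrix.mem_unitaryGroup_iff'.mp hU
  rw [mem_doublyStochastic_iff_sum]
  refine ⟨fun i j => sq_nonneg _, fun i => ?_, fun j => ?_⟩
  · have key : ∑ j, U i j * (star U) j i = (1 : Matrix (Fin k) (Fin k) ℂ) i i := by
      rw [← Matrix.mul_apply, h1]
    rw [Matrix.one_apply_eq] at key
    have : ((∑ j, ‖U i j‖^2 : ℝ) : ℂ) = ((1 : ℝ) : ℂ) := by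
      rw [Complex.ofReal_sum, Complex.ofReal_one, ← key]
      apply Finset.sum_congr rfl
      intro j _
      rw [Matrix.star_apply, hw_self_mul_conj]
    exact_mod_cast this
  · have key : ∑ i, (star U) j i * U i j = (1 : Matrix (Fin k) (Fin k) ℂ) j j := by
      rw [← Matrix.mul_apply, h2]
    rw [Matrix.one_apply_eq] at key
    have : ((∑ i, ‖U i j‖^2 : ℝ) : ℂ) = ((1 : ℝ) : ℂ) := by
      rw [Complex.ofReal_sum, Complex.ofReal_one, ← key]
      apply Finset.sum_congr rfl
      intro i _
      rw [Matrix.star_apply]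
      exact (hw_conj_mul_self (U i j)).symm ▸ rfl
    exact_mod_cast this

private lemma hw_master {k : ℕ} (A B V W u : Matrix (Fin k) (Fin k) ℂ) (a b : Fin k → ℝ)
    (hV : V ∈ Matrix.unitaryGroup (Fin k) ℂ) (hW : W ∈ Matrix.unitaryGroup (Fin k) ℂ)
    (hu : u ∈ Matrix.unitaryGroup (Fin k) ℂ)
    (hAdec : A = V * Matrix.diagonal (fun i => (a i : ℂ)) * star V)
    (hBdec : B = W * Matrix.diagonal (fun i => (b i : ℂ)) * star W) :
    ∑ i, ∑ j, ‖(u * A * star u - B) i j‖^2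
      = ∑ i, (a i)^2 + ∑ i, (b i)^2
        - 2 * ∑ i, ∑ j, ‖(star W * u * V) i j‖^2 * (b i * a j) := by
  have h1W : W * star W = 1 := Matrix.mem_unitaryGroup_iff.mp hW
  set U := star W * u * V with hUdef
  have hUmem : U ∈ Matrix.unitaryGroup (Fin k) ℂ :=
    mul_mem (mul_mem (Unitary.star_mem hW) hu) hV
  have hsU : star U = star V * star u * W := by
    rw [hUdef, StarMul.star_mul, StarMul.star_mul, star_star, Matrix.mul_assoc]
  have hred : u * A * star u - B
      = W * (U * Matrix.diagonal (fun i => (a i : ℂ)) * star U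
          - Matrix.diagonal (fun i => (b i : ℂ))) * star W := by
    rw [hsU, hUdef, hAdec, hBdec]
    calc u * (V * Matrix.diagonal (fun i => (a i : ℂ)) * star V) * star u
          - W * Matrix.diagonal (fun i => (b i : ℂ)) * star W
        = (W * star W) * (u * (V * Matrix.diagonal (fun i => (a i : ℂ)) * star V) * star u)
            * (W * star W) - W * Matrix.diagonal (fun i => (b i : ℂ)) * star W := by
          rw [h1W, Matrix.one_mul, Matrix.mul_one]
      _ = W * ((star W * u * V) * Matrix.diagonal (fun i => (a i : ℂ))
            * (star V * star u * W) - Matrix.diagonal (fun i => (b i : ℂ))) * star W := by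
          noncomm_ring
  rw [hred, hw_sum_sq_unitary_conj _ _ hW, hw_expansion a b U hUmem]

end HoffmanWielandtAux

/-- For Hermitian `k × k` matrices `A, B` with eigenvalues `λA, λB` listed in
nondecreasing order with multiplicity (encoded via the characteristic polynomials),
the minimum over unitaries `u` of the Frobenius norm `‖uAu* - B‖_F` equals
`(∑ i (λA i - λB i)²)^{1/2}`; in particular for every `ε ≥ 0` a unitary `u` with
`‖uAu* - B‖_F ≤ ε` exists iff `(∑ i (λA i - λB i)²)^{1/2} ≤ ε`. -/
theorem stmt9 (k : ℕ) (hk : 1 ≤ k) (A B : Matrix (Fin k) (Fin k) ℂ)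
    (hA : A.IsHermitian) (hB : B.IsHermitian)
    (lA lB : Fin k → ℝ) (hlA : Monotone lA) (hlB : Monotone lB)
    (hAchar : A.charpoly = ∏ i, (X - C (lA i : ℂ)))
    (hBchar : B.charpoly = ∏ i, (X - C (lB i : ℂ)))
    (frob : Matrix (Fin k) (Fin k) ℂ → ℝ)
    (hfrob : ∀ C : Matrix (Fin k) (Fin k) ℂ,
      frob C = Real.sqrt (∑ i, ∑ j, ‖C i j‖ ^ 2)) :
    IsLeast
      {r : ℝ | ∃ u : Matrix (Fin k) (Fin k) ℂ, u ∈ Matrix.unitaryGroup (Fin k) ℂ ∧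
        r = frob (u * A * star u - B)}
      (Real.sqrt (∑ i, (lA i - lB i) ^ 2)) ∧
    ∀ ε : ℝ, 0 ≤ ε →
      ((∃ u ∈ Matrix.unitaryGroup (Fin k) ℂ, frob (u * A * star u - B) ≤ ε) ↔
        Real.sqrt (∑ i, (lA i - lB i) ^ 2) ≤ ε) := by
  obtain ⟨V, hV, hAdec⟩ := hw_exists_unitary_diag A hA lA hlA hAchar
  obtain ⟨W, hW, hBdec⟩ := hw_exists_unitary_diag B hB lB hlB hBchar
  have hsum_id : ∑ i, (lA i - lB i) ^ 2
      = ∑ i, (lA i)^2 + ∑ i, (lB i)^2 - 2 * ∑ i, lB i * lA i := by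
    calc ∑ i, (lA i - lB i) ^ 2
        = ∑ i, ((lA i)^2 + (lB i)^2 - 2 * (lB i * lA i)) := by
          apply Finset.sum_congr rfl
          intro i _
          ring
      _ = ∑ i, ((lA i)^2 + (lB i)^2) - ∑ i, 2 * (lB i * lA i) := Finset.sum_sub_distrib _ _
      _ = ∑ i, (lA i)^2 + ∑ i, (lB i)^2 - 2 * ∑ i, lB i * lA i := by
          rw [Finset.sum_add_distrib, ← Finset.mul_sum]
  -- lower bound for every unitary
  have hineq : ∀ u ∈ Matrix.unitaryGroup (Fin k) ℂ,
      ∑ i, (lA i - lB i) ^ 2 ≤ ∑ i, ∑ j, ‖(u * A * star u - B) i j‖^2 := by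
    intro u hu
    rw [hw_master A B V W u lA lB hV hW hu hAdec hBdec, hsum_id]
    have hds := hw_ds_bound lA lB hlA hlB (Matrix.of fun i j => ‖(star W * u * V) i j‖^2)
      (hw_unitary_sq_ds _ (mul_mem (mul_mem (Unitary.star_mem hW) hu) hV))
    have : ∑ i, ∑ j, ‖(star W * u * V) i j‖^2 * (lB i * lA j) ≤ ∑ i, lB i * lA i := by
      simpa using hds
    linarith
  -- the optimal unitary
  have hu₀mem : (W * star V) ∈ Matrix.unitaryGroup (Fin k) ℂ :=
    mul_mem hW (Unitary.star_mem hV)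
  have hU₀ : star W * (W * star V) * V = 1 := by
    rw [← Matrix.mul_assoc, Matrix.mul_assoc (star W * W), Matrix.mem_unitaryGroup_iff'.mp hW,
      Matrix.one_mul, Matrix.mem_unitaryGroup_iff'.mp hV]
  have hval₀ : ∑ i, ∑ j, ‖((W * star V) * A * star (W * star V) - B) i j‖^2
      = ∑ i, (lA i - lB i) ^ 2 := by
    rw [hw_master A B V W (W * star V) lA lB hV hW hu₀mem hAdec hBdec, hU₀, hsum_id]
    have hone : ∑ i, ∑ j, ‖(1 : Matrix (Fin k) (Fin k) ℂ) i j‖^2 * (lB i * lA j)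
        = ∑ i, lB i * lA i := by
      apply Finset.sum_congr rfl
      intro i _
      rw [Finset.sum_eq_single i]
      · simp
      · intro j _ hj
        simp [Matrix.one_apply, (Ne.symm hj)]
      · intro h
        exact absurd (Finset.mem_univ _) h
    rw [hone]
  have ht0 : (0 : ℝ) ≤ ∑ i, (lA i - lB i) ^ 2 :=
    Finset.sum_nonneg fun i _ => sq_nonneg _
  have hfrob₀ : frob ((W * star V) * A * star (W * star V) - B)
      = Real.sqrt (∑ i, (lA i - lB i) ^ 2) := by
    rw [hfrob, hval₀]
  have hlower : ∀ u ∈ Matrix.unitaryGroup (Fin k) ℂ,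
      Real.sqrt (∑ i, (lA i - lB i) ^ 2) ≤ frob (u * A * star u - B) := by
    intro u hu
    rw [hfrob]
    exact Real.sqrt_le_sqrt (hineq u hu)
  refine ⟨⟨⟨W * star V, hu₀mem, hfrob₀.symm⟩, ?_⟩, ?_⟩
  · rintro r ⟨u, hu, rfl⟩
    exact hlower u hu
  · intro ε hε
    constructor
    · rintro ⟨u, hu, hle⟩
      exact le_trans (hlower u hu) hle
    · intro hle
      exact ⟨W * star V, hu₀mem, by rw [hfrob₀]; exact hle⟩
end

section
/- The family of real numbers ( 2^{−(i+j)} · | log | 1/i − 1/j | | ) indexed by pairs of positive integers (i,j) with i ≠ j is summable; in particular −∞ < ∑_{i ≠ j} 2^{−(i+j)} · log | 1/i − 1/j | < ∞. -/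
lemma log_bound (i j : ℕ) (hi : 0 < i) (hj : 0 < j) (hij : i ≠ j) :
    |Real.log (abs (1 / (i : ℝ) - 1 / (j : ℝ)))| ≤ (i : ℝ) + j := by
  have hi' : (1 : ℝ) ≤ i := by exact_mod_cast hi
  have hj' : (1 : ℝ) ≤ j := by exact_mod_cast hj
  have hi0 : (0 : ℝ) < i := by positivity
  have hj0 : (0 : ℝ) < j := by positivity
  set x : ℝ := |1 / (i : ℝ) - 1 / (j : ℝ)| with hx
  have hne : (1 / (i : ℝ)) ≠ 1 / (j : ℝ) := by
    intro h
    apply hij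
    have : (i : ℝ) = j := by
      field_simp at h; exact_mod_cast h.symm
    exact_mod_cast this
  have hx0 : 0 < x := abs_pos.mpr (sub_ne_zero.mpr hne)
  have hxle : x ≤ 1 := by
    rw [hx, abs_sub_le_iff]
    constructor
    · have h1 : 1 / (i : ℝ) ≤ 1 := by
        rw [div_le_one hi0]; exact hi'
      have h2 : 0 ≤ 1 / (j : ℝ) := by positivity
      linarith
    · have h1 : 1 / (j : ℝ) ≤ 1 := by
        rw [div_le_one hj0]; exact hj'
      have h2 : 0 ≤ 1 / (i : ℝ) := by positivity
      linarith
  have hlow : 1 / ((i : ℝ) * j) ≤ x := by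
    have hd : (1 : ℝ) ≤ |(j : ℝ) - i| := by
      rcases Nat.lt_or_ge i j with h | h
      · have : (i : ℝ) + 1 ≤ j := by exact_mod_cast h
        rw [abs_of_pos (by linarith)]; linarith
      · have h' : j < i := lt_of_le_of_ne h (Ne.symm hij)
        have : (j : ℝ) + 1 ≤ i := by exact_mod_cast h'
        rw [abs_of_neg (by linarith)]; linarith
    have : x = |(j : ℝ) - i| / ((i : ℝ) * j) := by
      rw [hx]
      rw [div_sub_div _ _ (ne_of_gt hi0) (ne_of_gt hj0)]
      rw [abs_div]
      congr 1
      · ring_nf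
      · rw [abs_of_pos (by positivity)]
    rw [this]
    apply div_le_div_of_nonneg_right hd (by positivity) |>.trans_eq rfl
  have hlog : Real.log (1 / ((i:ℝ) * j)) ≤ Real.log x :=
    Real.log_le_log (by positivity) hlow
  rw [Real.log_div one_ne_zero (by positivity), Real.log_one] at hlog
  have hlogx_le : Real.log x ≤ 0 := Real.log_nonpos (le_of_lt hx0) hxle
  rw [abs_of_nonpos hlogx_le]
  have : Real.log ((i : ℝ) * j) ≤ (i : ℝ) + j := by
    rw [Real.log_mul (ne_of_gt hi0) (ne_of_gt hj0)]
    have h1 : Real.log i ≤ i := (Real.log_le_sub_one_of_pos hi0).trans (by linarith)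
    have h2 : Real.log j ≤ j := (Real.log_le_sub_one_of_pos hj0).trans (by linarith)
    linarith
  linarith

lemma aux_summable :
    Summable (fun p : ℕ × ℕ => (1 / 2 ^ (p.1 + p.2) : ℝ) * ((p.1 : ℝ) + p.2)) := by
  have hs1 : Summable (fun n : ℕ => (n : ℝ) * (1/2) ^ n) := by
    have := summable_pow_mul_geometric_of_norm_lt_one (R := ℝ) 1
      (r := (1/2 : ℝ)) (by rw [Real.norm_eq_abs, abs_of_pos] <;> norm_num)
    simpa using this
  have hs2 : Summable (fun n : ℕ => ((1/2 : ℝ)) ^ n) :=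
    summable_geometric_of_lt_one (by norm_num) (by norm_num)
  have h1 : Summable (fun p : ℕ × ℕ => ((p.1 : ℝ) * (1/2)^p.1) * ((1/2)^p.2)) :=
    hs1.mul_of_nonneg hs2 (fun n => by positivity) (fun n => by positivity)
  have h2 : Summable (fun p : ℕ × ℕ => ((1/2 : ℝ)^p.1) * ((p.2 : ℝ) * (1/2)^p.2)) :=
    hs2.mul_of_nonneg hs1 (fun n => by positivity) (fun n => by positivity)
  have := h1.add h2
  apply this.congr
  intro p
  rw [pow_add]
  field_simp
  have e1 : (1/2 : ℝ)^p.1 * 2^p.1 = 1 := by rw [← mul_pow]; norm_num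
  have e2 : (1/2 : ℝ)^p.2 * 2^p.2 = 1 := by rw [← mul_pow]; norm_num
  linear_combination ((p.1 : ℝ) + p.2) * (1/2 : ℝ)^p.2 * 2^p.2 * e1 + ((p.1 : ℝ) + p.2) * e2

/-- The family `2^{-(i+j)} |log|1/i - 1/j||`, indexed by pairs of positive integers
`(i,j)` with `i ≠ j`, is summable; in particular the off-diagonal logarithmic energy
`∑_{i≠j} 2^{-(i+j)} log|1/i - 1/j|` is finite. -/
theorem stmt13 :
    Summable (fun p : {p : ℕ × ℕ // 0 < p.1 ∧ 0 < p.2 ∧ p.1 ≠ p.2} =>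
      (1 / 2 ^ (p.val.1 + p.val.2) : ℝ) *
        |Real.log (abs (1 / (p.val.1 : ℝ) - 1 / (p.val.2 : ℝ)))|) := by
  have hg : Summable (fun p : {p : ℕ × ℕ // 0 < p.1 ∧ 0 < p.2 ∧ p.1 ≠ p.2} =>
      (1 / 2 ^ (p.val.1 + p.val.2) : ℝ) * ((p.val.1 : ℝ) + p.val.2)) :=
    aux_summable.subtype _
  apply Summable.of_nonneg_of_le (fun p => by positivity) _ hg
  rintro ⟨p, hp1, hp2, hp3⟩
  apply mul_le_mul_of_nonneg_left (log_bound p.1 p.2 hp1 hp2 hp3) (by positivity)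
end
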